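/- Let G be a finite simple graph, let A_1, …, A_L be a partition of V(G), and let S be a nonempty finite set of automorphisms of G that is A-balancing. Let p ≥ 0 be an integer. If x ∈ LS+^p(G), then the vector x' := ∑_{ℓ=1}^{L} ( (1/|A_ℓ|) ∑_{i ∈ A_ℓ} x_i ) · χ_{A_ℓ}, where χ_{A_ℓ} is the 0/1 indicator vector of A_ℓ, also belongs to LS+^p(G). -/

import Mathlib

open Finset

noncomputable section

/-- `cone(P)`: the homogenization of `P`, indexed by `Option V` with `none` playing
the role of the `0` coordinate. -/
def lsCone {V : Type*} (P : Set (V → ℝ)) : Set (Option V → ℝ) :=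
  {y | ∃ (lam : ℝ) (x : V → ℝ), 0 ≤ lam ∧ x ∈ P ∧
    y = fun o => o.elim lam (fun v => lam * x v)}

/-- The lift `LŜ₊(P)`: symmetric PSD matrices `Y` indexed by `Option V`
with `Y e₀ = diag Y` and all columns conditions. -/
def lsLift {V : Type*} [Fintype V] [DecidableEq V] (P : Set (V → ℝ)) :
    Set (Matrix (Option V) (Option V) ℝ) :=
  {Y | Y.PosSemidef ∧ Y.mulVec (Pi.single none 1) = Matrix.diag Y ∧
      ∀ v : V, Y.mulVec (Pi.single (some v) 1) ∈ lsCone P ∧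
        Y.mulVec (Pi.single none 1 - Pi.single (some v) 1) ∈ lsCone P}

/-- The Lovász–Schrijver operator `LS₊`. -/
def lsPlus {V : Type*} [Fintype V] [DecidableEq V] (P : Set (V → ℝ)) : Set (V → ℝ) :=
  {x | ∃ Y ∈ lsLift P, Y.mulVec (Pi.single none 1) = fun o => o.elim 1 x}

/-- The fractional stable set polytope. -/
def FRAC {V : Type*} (G : SimpleGraph V) : Set (V → ℝ) :=
  {x | (∀ v, 0 ≤ x v ∧ x v ≤ 1) ∧ ∀ u v, G.Adj u v → x u + x v ≤ 1}

/-- The stable set polytope: convex hull of incidence vectors of stable sets. -/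
def STAB {V : Type*} (G : SimpleGraph V) : Set (V → ℝ) :=
  convexHull ℝ {x | ∃ S : Set V, (∀ u ∈ S, ∀ v ∈ S, ¬ G.Adj u v) ∧
    x = S.indicator fun _ => (1 : ℝ)}

/-- The graph `H_k`, on vertex set `Fin k × Fin 3` (vertex `i_p` is `(i, p)`). -/
def Hgraph (k : ℕ) : SimpleGraph (Fin k × Fin 3) :=
  SimpleGraph.fromRel (fun a b =>
    (a.1 = b.1 ∧ ((a.2 = 0 ∧ b.2 = 1) ∨ (a.2 = 1 ∧ b.2 = 2))) ∨
    (a.1 ≠ b.1 ∧ a.2 = 0 ∧ b.2 = 2))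

/-- The vector `w_k(a,b)`: entry `a` on `[k]₀ ∪ [k]₂` and `b` on `[k]₁`. -/
def wVec (k : ℕ) (a b : ℝ) : Fin k × Fin 3 → ℝ := fun v => if v.2 = 1 then b else a

/-! ### Auxiliary lemmas -/

lemma psd_combo {n : Type*} [Fintype n] {M N : Matrix n n ℝ} (hM : M.PosSemidef)
    (hN : N.PosSemidef) {a b : ℝ} (ha : 0 ≤ a) (hb : 0 ≤ b) :
    (a • M + b • N).PosSemidef := by
  have hMt : M.transpose = M := by simpa using hM.1.eq
  have hNt : N.transpose = N := by simpa using hN.1.eq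
  refine ⟨?_, fun x => ?_⟩
  · refine Matrix.IsHermitian.add ?_ ?_ <;>
      simp [Matrix.IsHermitian, Matrix.conjTranspose_smul, hMt, hNt]
  · have h1 := hM.2 x
    have h2 := hN.2 x
    simp only [star_trivial] at h1 h2
    simp only [Matrix.add_mulVec, Matrix.smul_mulVec, dotProduct_add, dotProduct_smul,
      smul_eq_mul, star_trivial]
    convert add_nonneg (mul_nonneg ha h1) (mul_nonneg hb h2) using 1
    simp only [Finsupp.sum, Finset.mul_sum, ← Finset.sum_add_distrib, Matrix.add_apply,
      Matrix.smul_apply, smul_eq_mul]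
    exact Finset.sum_congr rfl fun i _ => Finset.sum_congr rfl fun j _ => by ring

lemma mulVec_single_one {n : Type*} [Fintype n] [DecidableEq n] (M : Matrix n n ℝ) (j : n) :
    M.mulVec (Pi.single j 1) = fun i => M i j := by
  funext i; simp [Matrix.mulVec, dotProduct, Pi.single_apply]

lemma lsCone_convex {V : Type*} {P : Set (V → ℝ)} (hP : Convex ℝ P) :
    Convex ℝ (lsCone P) := by
  rintro y₁ ⟨l₁, x₁, hl₁, hx₁, rfl⟩ y₂ ⟨l₂, x₂, hl₂, hx₂, rfl⟩ a b ha hb hab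
  rcases eq_or_lt_of_le (add_nonneg (mul_nonneg ha hl₁) (mul_nonneg hb hl₂)) with h0 | h0
  · have h1 : a * l₁ = 0 := by nlinarith [mul_nonneg ha hl₁, mul_nonneg hb hl₂]
    have h2 : b * l₂ = 0 := by nlinarith [mul_nonneg ha hl₁, mul_nonneg hb hl₂]
    refine ⟨0, x₁, le_refl 0, hx₁, ?_⟩
    funext o; cases o with
    | none => simp [h1, h2]
    | some v =>
        simp only [Pi.add_apply, Pi.smul_apply, smul_eq_mul, Option.elim]
        rw [show a * (l₁ * x₁ v) = (a * l₁) * x₁ v by ring,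
          show b * (l₂ * x₂ v) = (b * l₂) * x₂ v by ring, h1, h2]; ring
  · set l : ℝ := a * l₁ + b * l₂ with hl
    have hlne : l ≠ 0 := ne_of_gt h0
    refine ⟨l, (a * l₁ / l) • x₁ + (b * l₂ / l) • x₂, le_of_lt h0,
      hP hx₁ hx₂ (by positivity) (by positivity) (by field_simp; exact hl.symm), ?_⟩
    funext o; cases o with
    | none => simp [hl]
    | some v =>
        simp only [Pi.add_apply, Pi.smul_apply, smul_eq_mul, Option.elim]
        field_simp
  
lemma lsLift_convex {V : Type*} [Fintype V] [DecidableEq V] {P : Set (V → ℝ)}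
    (hP : Convex ℝ P) : Convex ℝ (lsLift P) := by
  rintro Y₁ ⟨h1, h2, h3⟩ Y₂ ⟨g1, g2, g3⟩ a b ha hb hab
  have hmv : ∀ f : Option V → ℝ, (a • Y₁ + b • Y₂).mulVec f
      = a • Y₁.mulVec f + b • Y₂.mulVec f := by
    intro f
    rw [Matrix.add_mulVec, Matrix.smul_mulVec, Matrix.smul_mulVec]
  refine ⟨psd_combo h1 g1 ha hb, ?_, fun v => ⟨?_, ?_⟩⟩
  · rw [hmv, h2, g2]
    funext o
    simp [Matrix.diag]
  · rw [hmv]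
    exact lsCone_convex hP (h3 v).1 (g3 v).1 ha hb hab
  · rw [hmv]
    exact lsCone_convex hP (h3 v).2 (g3 v).2 ha hb hab

lemma lsPlus_convex {V : Type*} [Fintype V] [DecidableEq V] {P : Set (V → ℝ)}
    (hP : Convex ℝ P) : Convex ℝ (lsPlus P) := by
  rintro x₁ ⟨Y₁, hY₁, e₁⟩ x₂ ⟨Y₂, hY₂, e₂⟩ a b ha hb hab
  refine ⟨a • Y₁ + b • Y₂, lsLift_convex hP hY₁ hY₂ ha hb hab, ?_⟩
  rw [Matrix.add_mulVec, Matrix.smul_mulVec, Matrix.smul_mulVec, e₁, e₂]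
  funext o; cases o with
  | none => simpa using hab
  | some v => simp

lemma lsCone_comp {V : Type*} {P : Set (V → ℝ)} {σ : V ≃ V}
    (hP : ∀ y ∈ P, (fun v => y (σ v)) ∈ P) :
    ∀ y ∈ lsCone P, (fun o => y (Option.map σ o)) ∈ lsCone P := by
  rintro y ⟨l, x, hl, hx, rfl⟩
  refine ⟨l, fun v => x (σ v), hl, hP x hx, ?_⟩
  funext o; cases o <;> simp

lemma lsPlus_comp {V : Type*} [Fintype V] [DecidableEq V] {P : Set (V → ℝ)} {σ : V ≃ V}
    (hP : ∀ y ∈ P, (fun v => y (σ v)) ∈ P) :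
    ∀ x ∈ lsPlus P, (fun v => x (σ v)) ∈ lsPlus P := by
  rintro x ⟨Y, ⟨hpsd, hdiag, hcol⟩, hY⟩
  set Y' : Matrix (Option V) (Option V) ℝ := Y.submatrix (Option.map σ) (Option.map σ) with hY'
  have hcolY : ∀ j : Option V, Y.mulVec (Pi.single j 1) = fun i => Y i j :=
    fun j => mulVec_single_one Y j
  have hcolY' : ∀ j : Option V, Y'.mulVec (Pi.single j 1) = fun i => Y' i j :=
    fun j => mulVec_single_one Y' j
  refine ⟨Y', ⟨hpsd.submatrix _, ?_, fun v => ⟨?_, ?_⟩⟩, ?_⟩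
  · rw [hcolY']
    funext o
    have := congrFun hdiag (Option.map σ o)
    rw [hcolY] at this
    simpa [Y', Matrix.diag, Matrix.submatrix] using this
  · rw [hcolY']
    have h := lsCone_comp hP _ (hcol (σ v)).1
    rw [hcolY] at h
    simpa [Y', Matrix.submatrix] using h
  · have h := lsCone_comp hP _ (hcol (σ v)).2
    rw [Matrix.mulVec_sub, hcolY, hcolY] at h
    rw [Matrix.mulVec_sub, hcolY', hcolY']
    simpa [Y', Matrix.submatrix, Pi.sub_def] using h
  · rw [hcolY']
    funext o
    have := congrFun hY (Option.map σ o)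
    rw [hcolY] at this
    cases o with
    | none => simpa [Y', Matrix.submatrix] using this
    | some v => simpa [Y', Matrix.submatrix] using this

lemma frac_convex {V : Type*} (G : SimpleGraph V) : Convex ℝ (FRAC G) := by
  rintro y ⟨h1, h2⟩ z ⟨g1, g2⟩ a b ha hb hab
  refine ⟨fun v => ⟨?_, ?_⟩, fun u v huv => ?_⟩
  · have := (h1 v).1; have := (g1 v).1
    simp only [Pi.add_apply, Pi.smul_apply, smul_eq_mul]
    positivity
  · have := (h1 v).2; have := (g1 v).2
    simp only [Pi.add_apply, Pi.smul_apply, smul_eq_mul]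
    nlinarith
  · have := h2 u v huv; have := g2 u v huv
    simp only [Pi.add_apply, Pi.smul_apply, smul_eq_mul]
    nlinarith

lemma frac_comp {V : Type*} (G : SimpleGraph V) {σ : V ≃ V}
    (hσ : ∀ i j, G.Adj i j ↔ G.Adj (σ i) (σ j)) :
    ∀ y ∈ FRAC G, (fun v => y (σ v)) ∈ FRAC G := by
  rintro y ⟨h1, h2⟩
  exact ⟨fun v => h1 _, fun u v huv => h2 _ _ ((hσ u v).mp huv)⟩

theorem lsPlus_balancing {V : Type*} [Fintype V] [DecidableEq V] (G : SimpleGraph V)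
    (L : ℕ) (A : Fin L → Finset V)
    (hA1 : ∀ ℓ, (A ℓ).Nonempty)
    (hA2 : ∀ ℓ ℓ', ℓ ≠ ℓ' → Disjoint (A ℓ) (A ℓ'))
    (hA3 : ∀ v : V, ∃ ℓ, v ∈ A ℓ)
    (S : Finset (V ≃ V)) (hS : S.Nonempty)
    (hAut : ∀ σ ∈ S, ∀ i j : V, G.Adj i j ↔ G.Adj (σ i) (σ j))
    (hBal1 : ∀ σ ∈ S, ∀ ℓ, (A ℓ).image σ = A ℓ)
    (hBal2 : ∀ ℓ, ∀ i ∈ A ℓ, ∀ j ∈ A ℓ, ∀ i' ∈ A ℓ, ∀ j' ∈ A ℓ,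
        (S.filter fun σ => σ i = j).card = (S.filter fun σ => σ i' = j').card)
    (p : ℕ) (x : V → ℝ) (hx : x ∈ (lsPlus (V := V))^[p] (FRAC G)) :
    (fun v => ∑ ℓ : Fin L, ((∑ i ∈ A ℓ, x i) / ((A ℓ).card : ℝ)) *
        (if v ∈ A ℓ then 1 else 0))
      ∈ (lsPlus (V := V))^[p] (FRAC G) := by
  -- properties of the iterated set
  set Q : ℕ → Set (V → ℝ) := fun q => (lsPlus (V := V))^[q] (FRAC G) with hQ
  have key : ∀ q, Convex ℝ (Q q) ∧ ∀ σ ∈ S, ∀ y ∈ Q q, (fun v => y (σ v)) ∈ Q q := by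
    intro q
    induction q with
    | zero => exact ⟨frac_convex G, fun σ hσ => frac_comp G (hAut σ hσ)⟩
    | succ n ih =>
        have hstep : Q (n + 1) = lsPlus (Q n) := by
          simp [hQ, Function.iterate_succ_apply']
        rw [hstep]
        exact ⟨lsPlus_convex ih.1, fun σ hσ => lsPlus_comp (ih.2 σ hσ)⟩
  have hScard : (0 : ℝ) < (S.card : ℝ) := by
    exact_mod_cast Nat.pos_of_ne_zero (Finset.card_ne_zero_of_mem hS.choose_spec)
  -- the convex combination
  have hmem : (∑ σ ∈ S, ((S.card : ℝ))⁻¹ • (fun v => x (σ v))) ∈ Q p := by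
    refine (key p).1.sum_mem (fun σ _ => by positivity) ?_
      (fun σ hσ => (key p).2 σ hσ x hx)
    rw [Finset.sum_const, nsmul_eq_mul]
    field_simp
  convert hmem using 1
  funext v
  obtain ⟨ℓ, hv⟩ := hA3 v
  have hAcard : (0 : ℝ) < ((A ℓ).card : ℝ) := by
    exact_mod_cast Nat.pos_of_ne_zero (Finset.card_ne_zero_of_mem (hA1 ℓ).choose_spec)
  -- LHS simplifies to the average over A ℓ
  have hLHS : ∑ ℓ' : Fin L, ((∑ i ∈ A ℓ', x i) / ((A ℓ').card : ℝ)) *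
      (if v ∈ A ℓ' then 1 else 0) = (∑ i ∈ A ℓ, x i) / ((A ℓ).card : ℝ) := by
    rw [Finset.sum_eq_single ℓ]
    · rw [if_pos hv, mul_one]
    · intro ℓ' _ hne
      have : v ∉ A ℓ' := fun hmem' =>
        (Finset.disjoint_left.mp (hA2 ℓ' ℓ hne)) hmem' hv
      rw [if_neg this, mul_zero]
    · intro h; exact absurd (Finset.mem_univ ℓ) h
  -- RHS computation
  have hmap : ∀ σ ∈ S, σ v ∈ A ℓ := by
    intro σ hσ
    rw [← hBal1 σ hσ ℓ]
    exact Finset.mem_image_of_mem _ hv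
  obtain ⟨v₀, hv₀⟩ := hA1 ℓ
  set c : ℕ := (S.filter fun σ => σ v = v₀).card with hc
  have hconst : ∀ j ∈ A ℓ, (S.filter fun σ => σ v = j).card = c :=
    fun j hj => hBal2 ℓ v hv j hj v hv v₀ hv₀
  have hfib : ∑ j ∈ A ℓ, (S.filter fun σ => σ v = j).card = S.card :=
    (Finset.card_eq_sum_card_fiberwise hmap).symm
  have hcA : (c : ℝ) * ((A ℓ).card : ℝ) = (S.card : ℝ) := by
    have : ∑ j ∈ A ℓ, c = S.card := by
      rw [← hfib]; exact Finset.sum_congr rfl fun j hj => (hconst j hj).symm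
    rw [Finset.sum_const, smul_eq_mul] at this
    exact_mod_cast by rw [mul_comm]; exact_mod_cast congrArg (Nat.cast (R := ℝ)) this
  have hsum : ∑ σ ∈ S, x (σ v) = (c : ℝ) * ∑ j ∈ A ℓ, x j := by
    rw [← Finset.sum_fiberwise_of_maps_to hmap (fun σ => x (σ v))]
    rw [Finset.mul_sum]
    refine Finset.sum_congr rfl fun j hj => ?_
    rw [Finset.sum_congr rfl (fun σ hσ => by
      rw [(Finset.mem_filter.mp hσ).2]), Finset.sum_const, nsmul_eq_mul, hconst j hj]
  have hRHS : (∑ σ ∈ S, ((S.card : ℝ))⁻¹ • (fun v => x (σ v))) v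
      = ((S.card : ℝ))⁻¹ * ((c : ℝ) * ∑ j ∈ A ℓ, x j) := by
    rw [Finset.sum_apply, ← hsum, Finset.mul_sum]
    exact Finset.sum_congr rfl fun σ _ => by simp
  rw [hRHS, hLHS]
  have hkey : ((S.card : ℝ))⁻¹ * (c : ℝ) = (((A ℓ).card : ℝ))⁻¹ := by
    field_simp
    linarith [hcA]
  rw [div_eq_mul_inv, ← hkey]
  ring
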